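/- For a self-adjoint operator setup on finite-dimensional spaces: let P : E → E' be a linear map between finite-dimensional complex inner product spaces, and let P* be its adjoint. Then for all t > 0, Tr(exp(-t P*P)) - Tr(exp(-t P P*)) = dim ker P - dim ker P* ; in particular the supertrace of the heat semigroup is constant in t and equals the index of P. -/

import Mathlib

open ContinuousLinearMap

private lemma MS.trace_exp_eq_tsum {F : Type*} [NormedAddCommGroup F] [NormedSpace ℂ F]
    [FiniteDimensional ℂ F] [CompleteSpace F] (A : F →L[ℂ] F) :
    LinearMap.trace ℂ F ((NormedSpace.exp A : F →L[ℂ] F) : F →ₗ[ℂ] F)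
      = ∑' n : ℕ, ((n.factorial : ℂ)⁻¹) •
          LinearMap.trace ℂ F ((A ^ n : F →L[ℂ] F) : F →ₗ[ℂ] F) := by
  let T : (F →L[ℂ] F) →L[ℂ] ℂ :=
    LinearMap.toContinuousLinearMap ((LinearMap.trace ℂ F) ∘ₗ (ContinuousLinearMap.coeLM ℂ))
  have hsum : Summable fun n : ℕ => ((n.factorial : ℂ)⁻¹) • A ^ n :=
    NormedSpace.expSeries_summable' A
  have := T.map_tsum hsum
  rw [NormedSpace.exp_eq_tsum ℂ]
  simpa [T] using this

private lemma MS.coe_pow {F : Type*} [NormedAddCommGroup F] [NormedSpace ℂ F]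
    (f : F →L[ℂ] F) (n : ℕ) :
    ((f ^ n : F →L[ℂ] F) : F →ₗ[ℂ] F) = (f : F →ₗ[ℂ] F) ^ n :=
  map_pow (ContinuousLinearMap.toLinearMapRingHom) f n

private lemma MS.trace_summable {F : Type*} [NormedAddCommGroup F] [NormedSpace ℂ F]
    [FiniteDimensional ℂ F] [CompleteSpace F] (A : F →L[ℂ] F) :
    Summable fun n : ℕ => ((n.factorial : ℂ)⁻¹) •
        LinearMap.trace ℂ F ((A ^ n : F →L[ℂ] F) : F →ₗ[ℂ] F) := by
  let T : (F →L[ℂ] F) →L[ℂ] ℂ :=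
    LinearMap.toContinuousLinearMap ((LinearMap.trace ℂ F) ∘ₗ (ContinuousLinearMap.coeLM ℂ))
  have hsum : Summable fun n : ℕ => ((n.factorial : ℂ)⁻¹) • A ^ n :=
    NormedSpace.expSeries_summable' A
  have := hsum.map T T.continuous
  refine this.congr fun n => ?_
  simp [T]

private lemma MS.comp_pow {E E' : Type*} [NormedAddCommGroup E] [InnerProductSpace ℂ E]
    [NormedAddCommGroup E'] [InnerProductSpace ℂ E']
    (P : E →ₗ[ℂ] E') (Q : E' →ₗ[ℂ] E) (n : ℕ) :
    (Q ∘ₗ P) ^ (n + 1) = Q ∘ₗ (((P ∘ₗ Q) ^ n) ∘ₗ P) := by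
  induction n with
  | zero => simp [pow_one, Module.End.one_eq_id]
  | succ n ih =>
      rw [pow_succ, ih, pow_succ]
      simp only [Module.End.mul_eq_comp, LinearMap.comp_assoc]

private lemma MS.trace_pow_comm {E E' : Type*} [NormedAddCommGroup E] [InnerProductSpace ℂ E]
    [NormedAddCommGroup E'] [InnerProductSpace ℂ E']
    [FiniteDimensional ℂ E] [FiniteDimensional ℂ E']
    (P : E →ₗ[ℂ] E') (Q : E' →ₗ[ℂ] E) (n : ℕ) :
    LinearMap.trace ℂ E ((Q ∘ₗ P) ^ (n + 1)) = LinearMap.trace ℂ E' ((P ∘ₗ Q) ^ (n + 1)) := by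
  rw [MS.comp_pow P Q n, LinearMap.trace_comp_comm', LinearMap.comp_assoc,
    ← Module.End.mul_eq_comp, ← pow_succ]

private lemma MS.ker_adjoint {E E' : Type*} [NormedAddCommGroup E] [InnerProductSpace ℂ E]
    [NormedAddCommGroup E'] [InnerProductSpace ℂ E']
    [FiniteDimensional ℂ E] [FiniteDimensional ℂ E'] (P : E →L[ℂ] E') :
    (LinearMap.ker ((ContinuousLinearMap.adjoint P : E' →L[ℂ] E) : E' →ₗ[ℂ] E))
      = (LinearMap.range (P : E →ₗ[ℂ] E'))ᗮ := by
  ext x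
  simp only [LinearMap.mem_ker, Submodule.mem_orthogonal, ContinuousLinearMap.coe_coe]
  constructor
  · rintro h _ ⟨y, rfl⟩
    simp only [ContinuousLinearMap.coe_coe]
    rw [← ContinuousLinearMap.adjoint_inner_right]
    simp [h]
  · intro h
    rw [← inner_self_eq_zero (𝕜 := ℂ), ContinuousLinearMap.adjoint_inner_right]
    exact h _ ⟨_, rfl⟩

/-- Finite-dimensional McKean–Singer formula: for a linear map `P` between
finite-dimensional complex inner product spaces, with adjoint `P*`, the supertrace
`Tr(exp(-t P*P)) - Tr(exp(-t P P*))` is constant in `t > 0` and equals the index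
`dim ker P - dim ker P*`. -/
theorem mckean_singer_finite_dimensional
    (E E' : Type*) [NormedAddCommGroup E] [InnerProductSpace ℂ E]
    [NormedAddCommGroup E'] [InnerProductSpace ℂ E']
    [FiniteDimensional ℂ E] [FiniteDimensional ℂ E']
    (P : E →L[ℂ] E') (t : ℝ) (ht : 0 < t) :
    LinearMap.trace ℂ E
        ((NormedSpace.exp ((-t : ℂ) • ((ContinuousLinearMap.adjoint P) ∘L P)) :
          E →L[ℂ] E) : E →ₗ[ℂ] E) -
      LinearMap.trace ℂ E'
        ((NormedSpace.exp ((-t : ℂ) • (P ∘L (ContinuousLinearMap.adjoint P))) :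
          E' →L[ℂ] E') : E' →ₗ[ℂ] E') =
      (Module.finrank ℂ (LinearMap.ker (P : E →ₗ[ℂ] E')) : ℂ) -
      (Module.finrank ℂ (LinearMap.ker ((ContinuousLinearMap.adjoint P : E' →L[ℂ] E) :
        E' →ₗ[ℂ] E)) : ℂ) := by
  set Q := ContinuousLinearMap.adjoint P with hQ
  set A : E →L[ℂ] E := (-t : ℂ) • (Q ∘L P) with hA
  set B : E' →L[ℂ] E' := (-t : ℂ) • (P ∘L Q) with hB
  -- traces of powers agree for n ≥ 1
  have hpow : ∀ n : ℕ,
      LinearMap.trace ℂ E ((A ^ n : E →L[ℂ] E) : E →ₗ[ℂ] E)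
        = LinearMap.trace ℂ E' ((B ^ n : E' →L[ℂ] E') : E' →ₗ[ℂ] E')
      ∨ n = 0 := by
    intro n
    match n with
    | 0 => exact Or.inr rfl
    | n + 1 =>
        left
        have hA' : ((A ^ (n+1) : E →L[ℂ] E) : E →ₗ[ℂ] E)
            = ((-t : ℂ) ^ (n+1)) • (((Q : E' →ₗ[ℂ] E) ∘ₗ (P : E →ₗ[ℂ] E')) ^ (n+1)) := by
          rw [hA, smul_pow, ContinuousLinearMap.coe_smul,
            MS.coe_pow (Q ∘L P) (n+1), ContinuousLinearMap.toLinearMap_comp]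
        have hB' : ((B ^ (n+1) : E' →L[ℂ] E') : E' →ₗ[ℂ] E')
            = ((-t : ℂ) ^ (n+1)) • (((P : E →ₗ[ℂ] E') ∘ₗ (Q : E' →ₗ[ℂ] E)) ^ (n+1)) := by
          rw [hB, smul_pow, ContinuousLinearMap.coe_smul,
            MS.coe_pow (P ∘L Q) (n+1), ContinuousLinearMap.toLinearMap_comp]
        rw [hA', hB', map_smul, map_smul,
          MS.trace_pow_comm (P : E →ₗ[ℂ] E') (Q : E' →ₗ[ℂ] E) n]
  rw [MS.trace_exp_eq_tsum A, MS.trace_exp_eq_tsum B,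
    ← Summable.tsum_sub (MS.trace_summable A) (MS.trace_summable B)]
  have htsum : (∑' n : ℕ, (((n.factorial : ℂ)⁻¹) •
        LinearMap.trace ℂ E ((A ^ n : E →L[ℂ] E) : E →ₗ[ℂ] E)
      - ((n.factorial : ℂ)⁻¹) •
        LinearMap.trace ℂ E' ((B ^ n : E' →L[ℂ] E') : E' →ₗ[ℂ] E')))
      = (Module.finrank ℂ E : ℂ) - (Module.finrank ℂ E' : ℂ) := by
    rw [tsum_eq_single 0]
    · have e1 : ((1 : E →L[ℂ] E) : E →ₗ[ℂ] E) = LinearMap.id := rfl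
      have e2 : ((1 : E' →L[ℂ] E') : E' →ₗ[ℂ] E') = LinearMap.id := rfl
      simp [e1, e2, LinearMap.trace_id]
    · intro n hn
      rcases hpow n with h | h
      · rw [h]; ring
      · exact absurd h hn
  rw [htsum]
  -- final dimension count
  have h1 := LinearMap.finrank_range_add_finrank_ker (P : E →ₗ[ℂ] E')
  have h2 := Submodule.finrank_add_finrank_orthogonal
    (K := LinearMap.range (P : E →ₗ[ℂ] E')) (E := E')
  rw [MS.ker_adjoint P]
  have h1' : (Module.finrank ℂ E : ℂ)
      = (Module.finrank ℂ (LinearMap.range (P : E →ₗ[ℂ] E')) : ℂ)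
        + (Module.finrank ℂ (LinearMap.ker (P : E →ₗ[ℂ] E')) : ℂ) := by
    exact_mod_cast congrArg (Nat.cast (R := ℂ)) h1.symm
  have h2' : (Module.finrank ℂ E' : ℂ)
      = (Module.finrank ℂ (LinearMap.range (P : E →ₗ[ℂ] E')) : ℂ)
        + (Module.finrank ℂ (LinearMap.range (P : E →ₗ[ℂ] E'))ᗮ : ℂ) := by
    exact_mod_cast congrArg (Nat.cast (R := ℂ)) h2.symm
  rw [h1', h2']
  ring
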